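/- arXiv:1203.6743 — 7 statements merged into one kernel-verified Lean document; each statement's English description precedes it below -/
import Mathlib

section
/- Let H be a complex Hilbert space, let 0 ≤ ε < 1, and let K, L be closed subspaces of H that are ε-orthogonal. Then the subspace K + L is closed in H. -/
open scoped ComplexInnerProductSpace

private lemma aux_sq (ε a b r n : ℝ) (hε₀ : 0 ≤ ε) (ha : 0 ≤ a) (hb : 0 ≤ b)
    (hε₁ : ε ≤ 1) (h2 : |r| ≤ ε * a * b) (hn : n = max a b) :
    (1 - ε) * n ^ 2 ≤ a ^ 2 + 2 * r + b ^ 2 := by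
  have h2' := abs_le.mp h2
  rcases max_cases a b with ⟨h, h'⟩ | ⟨h, h'⟩ <;> rw [hn, h] <;>
    nlinarith [sq_nonneg (a - b), mul_nonneg ha hb, sq_nonneg a, sq_nonneg b, mul_nonneg hε₀ (sq_nonneg (a - b))]

/-- If `K` and `L` are closed subspaces of a complex Hilbert space `H` that are
`ε`-orthogonal for some `0 ≤ ε < 1`, then `K + L` is closed. -/
theorem closed_sum_of_epsilon_orthogonal
    {H : Type*} [NormedAddCommGroup H] [InnerProductSpace ℂ H] [CompleteSpace H]
    (ε : ℝ) (hε₀ : 0 ≤ ε) (hε₁ : ε < 1)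
    (K L : Submodule ℂ H)
    (hK : IsClosed (K : Set H)) (hL : IsClosed (L : Set H))
    (horth : ∀ ξ ∈ K, ∀ η ∈ L, ‖⟪ξ, η⟫‖ ≤ ε * ‖ξ‖ * ‖η‖) :
    IsClosed ((K ⊔ L : Submodule ℂ H) : Set H) := by
  haveI : CompleteSpace K := hK.completeSpace_coe
  haveI : CompleteSpace L := hL.completeSpace_coe
  set f : (K × L) →L[ℂ] H :=
    (K.subtypeL.comp (ContinuousLinearMap.fst ℂ K L)) +
      (L.subtypeL.comp (ContinuousLinearMap.snd ℂ K L)) with hf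
  have hfapp : ∀ p : K × L, f p = (p.1 : H) + (p.2 : H) := by
    intro p; simp [hf]
  have hrange : Set.range f = ((K ⊔ L : Submodule ℂ H) : Set H) := by
    ext x
    simp only [Set.mem_range, SetLike.mem_coe, Submodule.mem_sup]
    constructor
    · rintro ⟨⟨ξ, η⟩, rfl⟩
      exact ⟨ξ, ξ.2, η, η.2, (hfapp (ξ, η)).symm⟩
    · rintro ⟨y, hy, z, hz, rfl⟩
      exact ⟨(⟨y, hy⟩, ⟨z, hz⟩), hfapp (⟨y, hy⟩, ⟨z, hz⟩)⟩
  rw [← hrange]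
  have hc : (0:ℝ) < 1 - ε := by linarith
  have hs : (0:ℝ) < Real.sqrt (1 - ε) := Real.sqrt_pos.mpr hc
  have key : ∀ p : K × L, ‖p‖ ≤ (Real.sqrt (1 - ε))⁻¹ * ‖f p‖ := by
    rintro ⟨ξ, η⟩
    have hsq : (1 - ε) * ‖((ξ, η) : K × L)‖ ^ 2 ≤ ‖f (ξ, η)‖ ^ 2 := by
      have h1 : ‖f (ξ, η)‖ ^ 2
          = ‖(ξ:H)‖ ^ 2 + 2 * Complex.re ⟪(ξ:H), (η:H)⟫ + ‖(η:H)‖ ^ 2 := by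
        rw [hfapp]
        exact norm_add_sq (𝕜 := ℂ) _ _
      have h2 : |Complex.re ⟪(ξ:H), (η:H)⟫| ≤ ε * ‖(ξ:H)‖ * ‖(η:H)‖ :=
        le_trans (Complex.abs_re_le_norm _) (horth _ ξ.2 _ η.2)
      have hmax : ‖((ξ, η) : K × L)‖ = max ‖(ξ:H)‖ ‖(η:H)‖ := by
        rw [Prod.norm_def, Submodule.coe_norm, Submodule.coe_norm]
      rw [h1]
      exact aux_sq ε ‖(ξ:H)‖ ‖(η:H)‖ _ _ hε₀ (norm_nonneg _) (norm_nonneg _) hε₁.le h2 hmax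
    have h4 : Real.sqrt (1 - ε) * ‖((ξ, η) : K × L)‖ ≤ ‖f (ξ, η)‖ := by
      have hb : (Real.sqrt (1 - ε) * ‖((ξ, η) : K × L)‖) ^ 2 ≤ ‖f (ξ, η)‖ ^ 2 := by
        rw [mul_pow, Real.sq_sqrt hc.le]; exact hsq
      have := Real.sqrt_le_sqrt hb
      rwa [Real.sqrt_sq (by positivity), Real.sqrt_sq (norm_nonneg _)] at this
    rw [inv_mul_eq_div, le_div_iff₀ hs]
    linarith
  have hanti : AntilipschitzWith ⟨(Real.sqrt (1 - ε))⁻¹, by positivity⟩ f :=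
    f.antilipschitz_of_bound key
  exact hanti.isClosed_range f.uniformContinuous
end

section
/- Let H be a complex Hilbert space, ε ≥ 0, and K, L closed subspaces of H that are ε-orthogonal, with orthogonal projections p and q respectively. Let r denote the orthogonal projection onto the closure of K + L. Then for every ξ ∈ H one has ‖pξ‖² + ‖qξ‖² ≤ (1 + ε)²·‖rξ‖². -/
open scoped ComplexInnerProductSpace

/-- If `K` and `L` are `ε`-orthogonal closed subspaces of a complex Hilbert space
with orthogonal projections `p` and `q`, and `r` is the orthogonal projection onto
the closure of `K + L`, then `‖pξ‖² + ‖qξ‖² ≤ (1 + ε)² ‖rξ‖²` for all `ξ`. -/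
theorem norm_sq_proj_add_le_of_epsilon_orthogonal
    {H : Type*} [NormedAddCommGroup H] [InnerProductSpace ℂ H] [CompleteSpace H]
    (ε : ℝ) (hε : 0 ≤ ε)
    (K L : Submodule ℂ H)
    (hK : IsClosed (K : Set H)) (hL : IsClosed (L : Set H))
    [CompleteSpace K] [CompleteSpace L]
    (horth : ∀ ξ ∈ K, ∀ η ∈ L, ‖⟪ξ, η⟫‖ ≤ ε * ‖ξ‖ * ‖η‖) :
    ∀ ξ : H,
      ‖(Submodule.orthogonalProjectionOnto K ξ : H)‖ ^ 2 + ‖(Submodule.orthogonalProjectionOnto L ξ : H)‖ ^ 2 ≤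
        (1 + ε) ^ 2 * ‖(Submodule.orthogonalProjectionOnto (K ⊔ L : Submodule ℂ H).topologicalClosure ξ : H)‖ ^ 2 := by
  intro ξ
  set M := (K ⊔ L : Submodule ℂ H).topologicalClosure with hM
  set k : H := (Submodule.orthogonalProjectionOnto K ξ : H) with hk
  set l : H := (Submodule.orthogonalProjectionOnto L ξ : H) with hl
  set ρ : H := (Submodule.orthogonalProjectionOnto M ξ : H) with hρ
  have hkK : k ∈ K := (Submodule.orthogonalProjectionOnto K ξ).2
  have hlL : l ∈ L := (Submodule.orthogonalProjectionOnto L ξ).2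
  have hklM : k + l ∈ M :=
    Submodule.le_topologicalClosure _
      (Submodule.add_mem _ (Submodule.mem_sup_left hkK) (Submodule.mem_sup_right hlL))
  -- ⟪k+l, ξ⟫ = ⟪k+l, ρ⟫
  have h1 : ⟪k + l, ξ - ρ⟫ = 0 :=
    (Submodule.mem_orthogonal M (ξ - ρ)).1 (Submodule.sub_starProjection_mem_orthogonal ξ) _ hklM
  have h2 : ⟪k, ξ - k⟫ = 0 :=
    (Submodule.mem_orthogonal K (ξ - k)).1 (Submodule.sub_starProjection_mem_orthogonal ξ) _ hkK
  have h3 : ⟪l, ξ - l⟫ = 0 :=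
    (Submodule.mem_orthogonal L (ξ - l)).1 (Submodule.sub_starProjection_mem_orthogonal ξ) _ hlL
  set S : ℝ := ‖k‖ ^ 2 + ‖l‖ ^ 2 with hS
  have hS0 : 0 ≤ S := by positivity
  have hkξ : ⟪k, ξ⟫ = (‖k‖ : ℂ) ^ 2 := by
    have := h2
    rw [inner_sub_right, sub_eq_zero] at this
    rw [this, inner_self_eq_norm_sq_to_K]; norm_cast
  have hlξ : ⟪l, ξ⟫ = (‖l‖ : ℂ) ^ 2 := by
    have := h3
    rw [inner_sub_right, sub_eq_zero] at this
    rw [this, inner_self_eq_norm_sq_to_K]; norm_cast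
  have hSre : S = Complex.re ⟪k + l, ρ⟫ := by
    have h1' : ⟪k + l, ξ⟫ = ⟪k + l, ρ⟫ := by
      have := h1
      rwa [inner_sub_right, sub_eq_zero] at this
    have : ⟪k + l, ρ⟫ = (‖k‖ : ℂ) ^ 2 + (‖l‖ : ℂ) ^ 2 := by
      rw [← h1', inner_add_left, hkξ, hlξ]
    rw [this]
    simp only [Complex.add_re, ← Complex.ofReal_pow, Complex.ofReal_re, hS]
  have hSle : S ≤ ‖k + l‖ * ‖ρ‖ := by
    calc S = Complex.re ⟪k + l, ρ⟫ := hSre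
    _ ≤ ‖⟪k + l, ρ⟫‖ := Complex.re_le_norm _
    _ ≤ ‖k + l‖ * ‖ρ‖ := norm_inner_le_norm _ _
  have hkl2 : ‖k + l‖ ^ 2 ≤ (1 + ε) * S := by
    have hre : Complex.re ⟪k, l⟫ ≤ ε * ‖k‖ * ‖l‖ :=
      le_trans (Complex.re_le_norm _) (horth k hkK l hlL)
    have h2e : 2 * (‖k‖ * ‖l‖) ≤ ‖k‖ ^ 2 + ‖l‖ ^ 2 := by nlinarith [two_mul_le_add_sq ‖k‖ ‖l‖]
    have hn : ‖k + l‖ ^ 2 = ‖k‖ ^ 2 + 2 * Complex.re ⟪k, l⟫ + ‖l‖ ^ 2 := by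
      have := @norm_add_sq ℂ H _ _ _ k l
      simpa using this
    nlinarith [hn, hre, h2e, mul_nonneg (mul_nonneg hε (norm_nonneg k)) (norm_nonneg l)]
  have key : S ≤ (1 + ε) * ‖ρ‖ ^ 2 := by
    rcases eq_or_lt_of_le hS0 with h0 | h0
    · nlinarith [sq_nonneg ‖ρ‖]
    · have hsq : S ^ 2 ≤ (1 + ε) * S * ‖ρ‖ ^ 2 := by
        nlinarith [hSle, hkl2, norm_nonneg ρ, norm_nonneg (k + l), mul_nonneg (norm_nonneg (k+l)) (norm_nonneg ρ)]
      nlinarith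
  have : (1 + ε) * ‖ρ‖ ^ 2 ≤ (1 + ε) ^ 2 * ‖ρ‖ ^ 2 := by nlinarith [sq_nonneg ‖ρ‖]
  linarith
end

section
/- Let H be a complex Hilbert space, 0 ≤ ε < 1, and K₁, K₂, K₃ closed subspaces of H such that Kᵢ and Kⱼ are ε-orthogonal for all i ≠ j. Then the closure of K₁ + K₂ and K₃ are ε'-orthogonal, where ε' = √2·ε/√(1 − ε). -/
open scoped ComplexInnerProductSpace

/-- If `K₁, K₂, K₃` are pairwise `ε`-orthogonal closed subspaces of a complex
Hilbert space with `0 ≤ ε < 1`, then the closure of `K₁ + K₂` and `K₃` are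
`ε'`-orthogonal with `ε' = √2 ε / √(1 - ε)`. -/
theorem epsilon_orthogonal_sup_of_three
    {H : Type*} [NormedAddCommGroup H] [InnerProductSpace ℂ H] [CompleteSpace H]
    (ε : ℝ) (hε₀ : 0 ≤ ε) (hε₁ : ε < 1)
    (K₁ K₂ K₃ : Submodule ℂ H)
    (hK₁ : IsClosed (K₁ : Set H)) (hK₂ : IsClosed (K₂ : Set H)) (hK₃ : IsClosed (K₃ : Set H))
    (h₁₂ : ∀ ξ ∈ K₁, ∀ η ∈ K₂, ‖⟪ξ, η⟫‖ ≤ ε * ‖ξ‖ * ‖η‖)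
    (h₂₃ : ∀ ξ ∈ K₂, ∀ η ∈ K₃, ‖⟪ξ, η⟫‖ ≤ ε * ‖ξ‖ * ‖η‖)
    (h₃₁ : ∀ ξ ∈ K₃, ∀ η ∈ K₁, ‖⟪ξ, η⟫‖ ≤ ε * ‖ξ‖ * ‖η‖) :
    ∀ ξ ∈ (K₁ ⊔ K₂ : Submodule ℂ H).topologicalClosure, ∀ η ∈ K₃,
      ‖⟪ξ, η⟫‖ ≤ Real.sqrt 2 * ε / Real.sqrt (1 - ε) * ‖ξ‖ * ‖η‖ := by
  intro ξ hξ η hη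
  set C : ℝ := Real.sqrt 2 * ε / Real.sqrt (1 - ε) with hC
  have h1ε : (0:ℝ) < 1 - ε := by linarith
  have hCnn : 0 ≤ C := by
    apply div_nonneg (mul_nonneg (Real.sqrt_nonneg _) hε₀) (Real.sqrt_nonneg _)
  have hC2 : C ^ 2 = 2 * ε ^ 2 / (1 - ε) := by
    rw [hC, div_pow, mul_pow, Real.sq_sqrt (by norm_num : (0:ℝ) ≤ 2),
      Real.sq_sqrt h1ε.le]
  -- the set of good vectors is closed
  have hSclosed : IsClosed {x : H | ‖⟪x, η⟫‖ ≤ C * ‖x‖ * ‖η‖} := by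
    apply isClosed_le
    · exact Continuous.norm (continuous_inner.comp (Continuous.prodMk continuous_id continuous_const))
    · exact ((continuous_const.mul continuous_norm).mul continuous_const)
  have hsub : ((K₁ ⊔ K₂ : Submodule ℂ H) : Set H) ⊆ {x : H | ‖⟪x, η⟫‖ ≤ C * ‖x‖ * ‖η‖} := by
    rintro x hx
    obtain ⟨a, ha, b, hb, rfl⟩ := Submodule.mem_sup.mp hx
    simp only [Set.mem_setOf_eq]
    have hA : ‖⟪a, η⟫‖ ≤ ε * ‖a‖ * ‖η‖ := by
      have := h₃₁ η hη a ha
      rw [← norm_inner_symm]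
      calc ‖⟪η, a⟫‖ ≤ ε * ‖η‖ * ‖a‖ := this
        _ = ε * ‖a‖ * ‖η‖ := by ring
    have hB : ‖⟪b, η⟫‖ ≤ ε * ‖b‖ * ‖η‖ := h₂₃ b hb η hη
    have hAB : ‖⟪a, b⟫‖ ≤ ε * ‖a‖ * ‖b‖ := h₁₂ a ha b hb
    have step1 : ‖⟪a + b, η⟫‖ ≤ ε * (‖a‖ + ‖b‖) * ‖η‖ := by
      rw [inner_add_left]
      calc ‖⟪a, η⟫ + ⟪b, η⟫‖ ≤ ‖⟪a, η⟫‖ + ‖⟪b, η⟫‖ := norm_add_le _ _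
        _ ≤ ε * ‖a‖ * ‖η‖ + ε * ‖b‖ * ‖η‖ := add_le_add hA hB
        _ = ε * (‖a‖ + ‖b‖) * ‖η‖ := by ring
    have hnormsq : (1 - ε) * (‖a‖ ^ 2 + ‖b‖ ^ 2) ≤ ‖a + b‖ ^ 2 := by
      have hexp : ‖a + b‖ ^ 2 = ‖a‖ ^ 2 + 2 * RCLike.re (⟪a, b⟫) + ‖b‖ ^ 2 :=
        norm_add_sq (𝕜 := ℂ) a b
      have hre : -‖⟪a, b⟫‖ ≤ RCLike.re (⟪a, b⟫) := by
        have := abs_le.mp (RCLike.abs_re_le_norm (⟪a, b⟫))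
        linarith [this.1]
      nlinarith [sq_nonneg (‖a‖ - ‖b‖), norm_nonneg a, norm_nonneg b]
    have step2 : ε * (‖a‖ + ‖b‖) ≤ C * ‖a + b‖ := by
      apply le_of_pow_le_pow_left₀ (n := 2) (by norm_num)
        (mul_nonneg hCnn (norm_nonneg _))
      rw [mul_pow, mul_pow, hC2]
      rw [div_mul_eq_mul_div, le_div_iff₀ h1ε]
      nlinarith [mul_le_mul_of_nonneg_left hnormsq (sq_nonneg ε),
        mul_nonneg (mul_nonneg (sq_nonneg ε) h1ε.le) (sq_nonneg (‖a‖ - ‖b‖))]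
    calc ‖⟪a + b, η⟫‖ ≤ ε * (‖a‖ + ‖b‖) * ‖η‖ := step1
      _ ≤ C * ‖a + b‖ * ‖η‖ := by
          exact mul_le_mul_of_nonneg_right step2 (norm_nonneg η)
  have : (ξ : H) ∈ {x : H | ‖⟪x, η⟫‖ ≤ C * ‖x‖ * ‖η‖} := by
    have hmem : (ξ : H) ∈ closure ((K₁ ⊔ K₂ : Submodule ℂ H) : Set H) := by
      rw [← Submodule.topologicalClosure_coe]; exact hξ
    exact closure_minimal hsub hSclosed hmem
  exact this
end

section
/- Let H be a complex Hilbert space, 0 ≤ ε < 1/2, and K₁, K₂, K₃, K₄ closed subspaces of H such that Kᵢ and Kⱼ are ε-orthogonal for all i ≠ j in {1,2,3,4}. Then the closure of K₁ + K₂ and the closure of K₃ + K₄ are δ(ε)-orthogonal, where δ(ε) = 2ε/√(1 − ε − √2·ε·√(1 − ε)). -/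
open scoped ComplexInnerProductSpace

/-- If `K₁, K₂, K₃, K₄` are pairwise `ε`-orthogonal closed subspaces of a complex
Hilbert space with `0 ≤ ε < 1/2`, then the closure of `K₁ + K₂` and the closure of
`K₃ + K₄` are `δ(ε)`-orthogonal, where `δ(ε) = 2ε / √(1 - ε - √2 ε √(1 - ε))`. -/
theorem epsilon_orthogonal_sup_of_four
    {H : Type*} [NormedAddCommGroup H] [InnerProductSpace ℂ H] [CompleteSpace H]
    (ε : ℝ) (hε₀ : 0 ≤ ε) (hε₁ : ε < 1 / 2)
    (K : Fin 4 → Submodule ℂ H)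
    (hK : ∀ i, IsClosed ((K i : Set H)))
    (horth : ∀ i j, i ≠ j → ∀ ξ ∈ K i, ∀ η ∈ K j, ‖⟪ξ, η⟫‖ ≤ ε * ‖ξ‖ * ‖η‖) :
    ∀ ξ ∈ (K 0 ⊔ K 1 : Submodule ℂ H).topologicalClosure,
      ∀ η ∈ (K 2 ⊔ K 3 : Submodule ℂ H).topologicalClosure,
        ‖⟪ξ, η⟫‖ ≤
          2 * ε / Real.sqrt (1 - ε - Real.sqrt 2 * ε * Real.sqrt (1 - ε)) * ‖ξ‖ * ‖η‖ := by
  have h1ε : (0:ℝ) < 1 - ε := by linarith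
  set D := 2 * ε / Real.sqrt (1 - ε - Real.sqrt 2 * ε * Real.sqrt (1 - ε)) with hDdef
  set C := 2 * ε / (1 - ε) with hCdef
  have hs2 : Real.sqrt 2 * ε * Real.sqrt (1 - ε) = Real.sqrt (2 * ε ^ 2 * (1 - ε)) := by
    rw [Real.sqrt_mul (by positivity), Real.sqrt_mul (by norm_num : (0:ℝ) ≤ 2),
      Real.sqrt_sq hε₀]
  have hden_pos : 0 < 1 - ε - Real.sqrt 2 * ε * Real.sqrt (1 - ε) := by
    rw [hs2, sub_pos]
    have h3 : (0:ℝ) < (1 - ε) * (1 - ε - 2 * ε ^ 2) :=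
      mul_pos h1ε (by nlinarith [mul_nonneg hε₀ hε₀])
    have : Real.sqrt (2 * ε ^ 2 * (1 - ε)) < Real.sqrt ((1 - ε) ^ 2) := by
      apply Real.sqrt_lt_sqrt (by positivity)
      nlinarith [h3]
    rwa [Real.sqrt_sq h1ε.le] at this
  have hden_le : 1 - ε - Real.sqrt 2 * ε * Real.sqrt (1 - ε) ≤ (1 - ε) ^ 2 := by
    rw [hs2]
    have h' : ε * (1 - ε) ≤ Real.sqrt (2 * ε ^ 2 * (1 - ε)) := by
      rw [show ε * (1 - ε) = Real.sqrt ((ε * (1 - ε)) ^ 2) from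
        (Real.sqrt_sq (by positivity)).symm]
      apply Real.sqrt_le_sqrt
      nlinarith [mul_nonneg (sq_nonneg ε) h1ε.le]
    nlinarith [h']
  have hCD : C ≤ D := by
    rw [hCdef, hDdef]
    have hsd : Real.sqrt (1 - ε - Real.sqrt 2 * ε * Real.sqrt (1 - ε)) ≤ 1 - ε := by
      have := Real.sqrt_le_sqrt hden_le
      rwa [Real.sqrt_sq h1ε.le] at this
    have hsd0 : 0 < Real.sqrt (1 - ε - Real.sqrt 2 * ε * Real.sqrt (1 - ε)) :=
      Real.sqrt_pos.mpr hden_pos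
    gcongr
  -- the algebraic core, on the plain sups
  have key : ∀ x ∈ (K 0 ⊔ K 1 : Submodule ℂ H), ∀ y ∈ (K 2 ⊔ K 3 : Submodule ℂ H),
      ‖⟪x, y⟫‖ ≤ C * ‖x‖ * ‖y‖ := by
    intro x hx y hy
    obtain ⟨x₁, hx₁, x₂, hx₂, rfl⟩ := Submodule.mem_sup.mp hx
    obtain ⟨y₁, hy₁, y₂, hy₂, rfl⟩ := Submodule.mem_sup.mp hy
    have lower : ∀ (a b : H), ‖⟪a, b⟫‖ ≤ ε * ‖a‖ * ‖b‖ →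
        (1 - ε) * (‖a‖ ^ 2 + ‖b‖ ^ 2) ≤ ‖a + b‖ ^ 2 := by
      intro a b hab
      have hre : |RCLike.re (⟪a, b⟫ : ℂ)| ≤ ‖(⟪a, b⟫ : ℂ)‖ := RCLike.abs_re_le_norm _
      have hsq := @norm_add_sq ℂ _ _ _ _ a b
      have habs : -(ε * ‖a‖ * ‖b‖) ≤ RCLike.re (⟪a, b⟫ : ℂ) := by
        have := abs_le.mp hre
        linarith
      nlinarith [mul_nonneg hε₀ (sq_nonneg (‖a‖ - ‖b‖)), norm_nonneg a, norm_nonneg b]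
    have hx12 := lower x₁ x₂ (horth 0 1 (by decide) x₁ hx₁ x₂ hx₂)
    have hy12 := lower y₁ y₂ (horth 2 3 (by decide) y₁ hy₁ y₂ hy₂)
    set c := Real.sqrt (2 / (1 - ε)) with hc
    have hc2 : c ^ 2 = 2 / (1 - ε) := Real.sq_sqrt (by positivity)
    have bnd : ∀ (a b : H), (1 - ε) * (‖a‖ ^ 2 + ‖b‖ ^ 2) ≤ ‖a + b‖ ^ 2 →
        ‖a‖ + ‖b‖ ≤ c * ‖a + b‖ := by
      intro a b h
      have h2 : (‖a‖ + ‖b‖) ^ 2 ≤ (c * ‖a + b‖) ^ 2 := by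
        rw [mul_pow, hc2, div_mul_eq_mul_div, le_div_iff₀ h1ε]
        nlinarith [sq_nonneg (‖a‖ - ‖b‖)]
      have := Real.sqrt_le_sqrt h2
      rwa [Real.sqrt_sq (by positivity), Real.sqrt_sq (by positivity)] at this
    have hA := bnd x₁ x₂ hx12
    have hB := bnd y₁ y₂ hy12
    have expand : ‖(⟪x₁ + x₂, y₁ + y₂⟫ : ℂ)‖ ≤ ε * (‖x₁‖ + ‖x₂‖) * (‖y₁‖ + ‖y₂‖) := by
      have e : (⟪x₁ + x₂, y₁ + y₂⟫ : ℂ) = ⟪x₁,y₁⟫ + ⟪x₁,y₂⟫ + ⟪x₂,y₁⟫ + ⟪x₂,y₂⟫ := by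
        simp [inner_add_left, inner_add_right]; ring
      calc ‖(⟪x₁ + x₂, y₁ + y₂⟫ : ℂ)‖
          ≤ ‖(⟪x₁,y₁⟫ : ℂ)‖ + ‖(⟪x₁,y₂⟫ : ℂ)‖ + ‖(⟪x₂,y₁⟫ : ℂ)‖ + ‖(⟪x₂,y₂⟫ : ℂ)‖ := by
            rw [e]
            calc ‖(⟪x₁,y₁⟫ + ⟪x₁,y₂⟫ + ⟪x₂,y₁⟫ + ⟪x₂,y₂⟫ : ℂ)‖
                ≤ ‖(⟪x₁,y₁⟫ + ⟪x₁,y₂⟫ + ⟪x₂,y₁⟫ : ℂ)‖ + ‖(⟪x₂,y₂⟫ : ℂ)‖ := norm_add_le _ _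
              _ ≤ ‖(⟪x₁,y₁⟫ + ⟪x₁,y₂⟫ : ℂ)‖ + ‖(⟪x₂,y₁⟫ : ℂ)‖ + ‖(⟪x₂,y₂⟫ : ℂ)‖ := by
                  gcongr; exact norm_add_le _ _
              _ ≤ ‖(⟪x₁,y₁⟫ : ℂ)‖ + ‖(⟪x₁,y₂⟫ : ℂ)‖ + ‖(⟪x₂,y₁⟫ : ℂ)‖ + ‖(⟪x₂,y₂⟫ : ℂ)‖ := by
                  gcongr; exact norm_add_le _ _
        _ ≤ ε * ‖x₁‖ * ‖y₁‖ + ε * ‖x₁‖ * ‖y₂‖ + ε * ‖x₂‖ * ‖y₁‖ + ε * ‖x₂‖ * ‖y₂‖ := by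
            gcongr
            · exact horth 0 2 (by decide) _ hx₁ _ hy₁
            · exact horth 0 3 (by decide) _ hx₁ _ hy₂
            · exact horth 1 2 (by decide) _ hx₂ _ hy₁
            · exact horth 1 3 (by decide) _ hx₂ _ hy₂
        _ = ε * (‖x₁‖ + ‖x₂‖) * (‖y₁‖ + ‖y₂‖) := by ring
    calc ‖(⟪x₁ + x₂, y₁ + y₂⟫ : ℂ)‖ ≤ ε * (‖x₁‖ + ‖x₂‖) * (‖y₁‖ + ‖y₂‖) := expand
      _ ≤ ε * (c * ‖x₁ + x₂‖) * (c * ‖y₁ + y₂‖) := by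
          gcongr <;> positivity
      _ = ε * c ^ 2 * ‖x₁ + x₂‖ * ‖y₁ + y₂‖ := by ring
      _ = C * ‖x₁ + x₂‖ * ‖y₁ + y₂‖ := by rw [hc2, hCdef]; ring
  -- pass to closures
  have step1 : ∀ y ∈ (K 2 ⊔ K 3 : Submodule ℂ H),
      ∀ x ∈ closure ((K 0 ⊔ K 1 : Submodule ℂ H) : Set H), ‖⟪x, y⟫‖ ≤ C * ‖x‖ * ‖y‖ := by
    intro y hy
    have hcl : IsClosed {x : H | ‖(⟪x, y⟫ : ℂ)‖ ≤ C * ‖x‖ * ‖y‖} := by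
      apply isClosed_le
      · exact (Continuous.inner continuous_id continuous_const).norm
      · exact (continuous_const.mul continuous_norm).mul continuous_const
    exact fun x hx => closure_minimal (fun x' hx' => key x' hx' y hy) hcl hx
  intro ξ hξ η hη
  have hξ' : ξ ∈ closure ((K 0 ⊔ K 1 : Submodule ℂ H) : Set H) := by
    rwa [← Submodule.topologicalClosure_coe]
  have hη' : η ∈ closure ((K 2 ⊔ K 3 : Submodule ℂ H) : Set H) := by
    rwa [← Submodule.topologicalClosure_coe]
  have step2 : ‖⟪ξ, η⟫‖ ≤ C * ‖ξ‖ * ‖η‖ := by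
    have hcl : IsClosed {y : H | ‖(⟪ξ, y⟫ : ℂ)‖ ≤ C * ‖ξ‖ * ‖y‖} := by
      apply isClosed_le
      · exact (Continuous.inner continuous_const continuous_id).norm
      · exact continuous_const.mul continuous_norm
    exact closure_minimal (fun y' hy' => step1 y' hy' ξ hξ') hcl hη'
  calc ‖⟪ξ, η⟫‖ ≤ C * ‖ξ‖ * ‖η‖ := step2
    _ ≤ D * ‖ξ‖ * ‖η‖ := by gcongr
end

section
/- Let H be a complex Hilbert space, k ≥ 1, and 0 ≤ ε < 1/2 such that the iterates δ^{∘j}(ε) are defined and satisfy δ^{∘j}(ε) < 1/2 for all 0 ≤ j ≤ k − 2 and δ^{∘(k−1)}(ε) < 1. Let K₁, …, K_{2^k} be closed subspaces of H such that Kᵢ and Kⱼ are ε-orthogonal whenever i ≠ j, let pᵢ denote the orthogonal projection onto Kᵢ, and for 1 ≤ ℓ ≤ k let P_ℓ denote the orthogonal projection onto the closure of K₁ + ⋯ + K_{2^ℓ}. Then for all 1 ≤ ℓ ≤ k and all ξ ∈ H, Σ_{i=1}^{2^ℓ} ‖pᵢξ‖² ≤ (∏_{j=0}^{ℓ−1}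 (1 + δ^{∘j}(ε))²)·‖P_ℓ ξ‖². -/
open scoped ComplexInnerProductSpace

/-- The function `δ(ε) = 2ε / √(1 - ε - √2 ε √(1 - ε))` from Lemma 2.2. -/
noncomputable def deltaFun (ε : ℝ) : ℝ :=
  2 * ε / Real.sqrt (1 - ε - Real.sqrt 2 * ε * Real.sqrt (1 - ε))

section Helpers

lemma deltaFun_nonneg {ε : ℝ} (hε : 0 ≤ ε) : 0 ≤ deltaFun ε :=
  div_nonneg (by linarith) (Real.sqrt_nonneg _)

lemma radicand_pos {ε : ℝ} (hε0 : 0 ≤ ε) (hε2 : ε < 1 / 2) :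
    0 < 1 - ε - Real.sqrt 2 * ε * Real.sqrt (1 - ε) := by
  have h1 : Real.sqrt 2 ^ 2 = 2 := Real.sq_sqrt (by norm_num)
  have h2 : Real.sqrt (1 - ε) ^ 2 = 1 - ε := Real.sq_sqrt (by linarith)
  have h3 : 0 ≤ Real.sqrt 2 := Real.sqrt_nonneg _
  have h4 : 0 ≤ Real.sqrt (1 - ε) := Real.sqrt_nonneg _
  have hw0 : 0 ≤ Real.sqrt 2 * ε * Real.sqrt (1 - ε) := by positivity
  have hw2 : (Real.sqrt 2 * ε * Real.sqrt (1 - ε)) ^ 2 = 2 * ε ^ 2 * (1 - ε) := by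
    rw [mul_pow, mul_pow, h1, h2]
  have k1 : 0 ≤ ε * (1 - 2 * ε) := mul_nonneg hε0 (by linarith)
  have k2 : 0 < 1 - ε - 2 * ε ^ 2 := by nlinarith
  have hlt : (Real.sqrt 2 * ε * Real.sqrt (1 - ε)) ^ 2 < (1 - ε) ^ 2 := by
    rw [hw2]
    nlinarith [mul_pos (show (0:ℝ) < 1 - ε by linarith) k2]
  have := lt_of_pow_lt_pow_left₀ 2 (by linarith : (0:ℝ) ≤ 1 - ε) hlt
  linarith

lemma two_div_le_deltaFun {ε : ℝ} (hε0 : 0 ≤ ε) (hε2 : ε < 1 / 2) :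
    2 * ε / (1 - ε) ≤ deltaFun ε := by
  have hr : 0 < 1 - ε - Real.sqrt 2 * ε * Real.sqrt (1 - ε) := radicand_pos hε0 hε2
  have h1 : Real.sqrt 2 ^ 2 = 2 := Real.sq_sqrt (by norm_num)
  have h2 : Real.sqrt (1 - ε) ^ 2 = 1 - ε := Real.sq_sqrt (by linarith)
  have h3 : Real.sqrt (1 - ε) ≤ Real.sqrt 2 := Real.sqrt_le_sqrt (by linarith)
  have h4 : 0 ≤ Real.sqrt (1 - ε) := Real.sqrt_nonneg _
  have hle : 1 - ε - Real.sqrt 2 * ε * Real.sqrt (1 - ε) ≤ (1 - ε) ^ 2 := by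
    nlinarith [mul_nonneg (mul_nonneg (sub_nonneg.2 h3) h4) hε0]
  have hs : Real.sqrt (1 - ε - Real.sqrt 2 * ε * Real.sqrt (1 - ε)) ≤ 1 - ε := by
    calc Real.sqrt (1 - ε - Real.sqrt 2 * ε * Real.sqrt (1 - ε))
        ≤ Real.sqrt ((1 - ε) ^ 2) := Real.sqrt_le_sqrt hle
      _ = 1 - ε := Real.sqrt_sq (by linarith)
  have hspos : 0 < Real.sqrt (1 - ε - Real.sqrt 2 * ε * Real.sqrt (1 - ε)) := Real.sqrt_pos.2 hr
  unfold deltaFun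
  gcongr

end Helpers

section Hilbert

variable {H : Type*} [NormedAddCommGroup H] [InnerProductSpace ℂ H] [CompleteSpace H]

/-- `ε`-orthogonality of two subspaces. -/
def EOrth (ε : ℝ) (K L : Submodule ℂ H) : Prop :=
  ∀ ξ ∈ K, ∀ η ∈ L, ‖⟪ξ, η⟫‖ ≤ ε * ‖ξ‖ * ‖η‖

theorem EOrth.symm {ε : ℝ} {K L : Submodule ℂ H} (h : EOrth ε K L) : EOrth ε L K := by
  intro η hη ξ hξ
  rw [norm_inner_symm, mul_right_comm]
  exact h ξ hξ η hη

theorem EOrth.mono {ε ε' : ℝ} {K L : Submodule ℂ H} (hle : ε ≤ ε') (h : EOrth ε K L) :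
    EOrth ε' K L := by
  intro ξ hξ η hη
  refine (h ξ hξ η hη).trans ?_
  have := mul_nonneg (norm_nonneg ξ) (norm_nonneg η)
  nlinarith

theorem EOrth.norm_add_sq_le {ε : ℝ} {K L : Submodule ℂ H} (hε : 0 ≤ ε) (h : EOrth ε K L)
    {a b : H} (ha : a ∈ K) (hb : b ∈ L) :
    ‖a + b‖ ^ 2 ≤ (1 + ε) * (‖a‖ ^ 2 + ‖b‖ ^ 2) := by
  have h1 := (h a ha b hb).trans' (RCLike.re_le_norm _)
  have h2 := norm_add_sq (𝕜 := ℂ) a b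
  nlinarith [sq_nonneg (‖a‖ - ‖b‖)]

theorem EOrth.le_norm_add_sq {ε : ℝ} {K L : Submodule ℂ H} (hε : 0 ≤ ε) (h : EOrth ε K L)
    {a b : H} (ha : a ∈ K) (hb : b ∈ L) :
    (1 - ε) * (‖a‖ ^ 2 + ‖b‖ ^ 2) ≤ ‖a + b‖ ^ 2 := by
  have h0 := h a ha b hb
  have h1 : -(ε * ‖a‖ * ‖b‖) ≤ RCLike.re ⟪a, b⟫ := by
    have := (abs_le.1 (RCLike.abs_re_le_norm ⟪a, b⟫)).1
    linarith
  have h2 := norm_add_sq (𝕜 := ℂ) a b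
  nlinarith [sq_nonneg (‖a‖ - ‖b‖)]

/-- If `K ⊥_ε L` and both are `c`-orthogonal to `M`, then the closure of `K ⊔ L`
is `√2 c / √(1-ε)`-orthogonal to `M`. -/
theorem eorth_sup_closure {ε c : ℝ} (hε0 : 0 ≤ ε) (hε1 : ε < 1) (hc : 0 ≤ c)
    {K L M : Submodule ℂ H} (hKL : EOrth ε K L) (hKM : EOrth c K M) (hLM : EOrth c L M) :
    EOrth (Real.sqrt 2 * c / Real.sqrt (1 - ε)) (K ⊔ L).topologicalClosure M := by
  intro ξ hξ η hη
  set C := Real.sqrt 2 * c / Real.sqrt (1 - ε) with hC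
  have hu : 0 < Real.sqrt (1 - ε) := Real.sqrt_pos.2 (by linarith)
  have hu2 : Real.sqrt (1 - ε) ^ 2 = 1 - ε := Real.sq_sqrt (by linarith)
  have h2 : 0 ≤ Real.sqrt 2 := Real.sqrt_nonneg _
  have h22 : Real.sqrt 2 ^ 2 = 2 := Real.sq_sqrt (by norm_num)
  have hclosed : IsClosed {x : H | ‖⟪x, η⟫‖ ≤ C * ‖x‖ * ‖η‖} := by
    apply isClosed_le
    · exact (continuous_id.inner continuous_const).norm
    · exact (continuous_const.mul continuous_norm).mul continuous_const
  have hsub : ((K ⊔ L : Submodule ℂ H) : Set H) ⊆ {x : H | ‖⟪x, η⟫‖ ≤ C * ‖x‖ * ‖η‖} := by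
    rintro x hx
    rcases Submodule.mem_sup.mp hx with ⟨a, ha, b, hb, rfl⟩
    have h1 : ‖⟪a + b, η⟫‖ ≤ c * (‖a‖ + ‖b‖) * ‖η‖ := by
      rw [inner_add_left]
      calc ‖⟪a, η⟫ + ⟪b, η⟫‖ ≤ ‖⟪a, η⟫‖ + ‖⟪b, η⟫‖ := norm_add_le _ _
        _ ≤ c * ‖a‖ * ‖η‖ + c * ‖b‖ * ‖η‖ := add_le_add (hKM a ha η hη) (hLM b hb η hη)
        _ = c * (‖a‖ + ‖b‖) * ‖η‖ := by ring
    have h3 : (1 - ε) * (‖a‖ ^ 2 + ‖b‖ ^ 2) ≤ ‖a + b‖ ^ 2 := hKL.le_norm_add_sq hε0 ha hb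
    have h4 : (‖a‖ + ‖b‖) ^ 2 ≤ 2 * (‖a‖ ^ 2 + ‖b‖ ^ 2) := by nlinarith [sq_nonneg (‖a‖ - ‖b‖)]
    have key : c * (‖a‖ + ‖b‖) ≤ C * ‖a + b‖ := by
      rw [hC, div_mul_eq_mul_div, le_div_iff₀ hu]
      have hA : 0 ≤ c * (‖a‖ + ‖b‖) * Real.sqrt (1 - ε) := by positivity
      have hB : 0 ≤ Real.sqrt 2 * c * ‖a + b‖ := by positivity
      have hsq : (c * (‖a‖ + ‖b‖) * Real.sqrt (1 - ε)) ^ 2 ≤ (Real.sqrt 2 * c * ‖a + b‖) ^ 2 := by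
        have e1 : (c * (‖a‖ + ‖b‖) * Real.sqrt (1 - ε)) ^ 2
            = c ^ 2 * (‖a‖ + ‖b‖) ^ 2 * (1 - ε) := by rw [mul_pow, mul_pow, hu2]
        have e2 : (Real.sqrt 2 * c * ‖a + b‖) ^ 2 = 2 * c ^ 2 * ‖a + b‖ ^ 2 := by
          rw [mul_pow, mul_pow, h22]
        rw [e1, e2]
        have f1 : c ^ 2 * (1 - ε) * (‖a‖ + ‖b‖) ^ 2 ≤ c ^ 2 * (1 - ε) * (2 * (‖a‖ ^ 2 + ‖b‖ ^ 2)) :=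
          mul_le_mul_of_nonneg_left h4 (by nlinarith [sq_nonneg c])
        have f2 : 2 * c ^ 2 * ((1 - ε) * (‖a‖ ^ 2 + ‖b‖ ^ 2)) ≤ 2 * c ^ 2 * ‖a + b‖ ^ 2 :=
          mul_le_mul_of_nonneg_left h3 (by positivity)
        nlinarith [f1, f2]
      calc c * (‖a‖ + ‖b‖) * Real.sqrt (1 - ε)
          = Real.sqrt ((c * (‖a‖ + ‖b‖) * Real.sqrt (1 - ε)) ^ 2) := (Real.sqrt_sq hA).symm
        _ ≤ Real.sqrt ((Real.sqrt 2 * c * ‖a + b‖) ^ 2) := Real.sqrt_le_sqrt hsq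
        _ = Real.sqrt 2 * c * ‖a + b‖ := Real.sqrt_sq hB
    calc ‖⟪a + b, η⟫‖ ≤ c * (‖a‖ + ‖b‖) * ‖η‖ := h1
      _ ≤ C * ‖a + b‖ * ‖η‖ := by
          have := norm_nonneg η
          nlinarith
  have hmem : ξ ∈ closure ((K ⊔ L : Submodule ℂ H) : Set H) := by
    rw [← Submodule.topologicalClosure_coe]; exact hξ
  exact closure_minimal hsub hclosed hmem

theorem pair_combine {ε : ℝ} (hε0 : 0 ≤ ε) (hε2 : ε < 1 / 2)
    {K1 K2 K3 K4 : Submodule ℂ H}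
    (h12 : EOrth ε K1 K2) (h34 : EOrth ε K3 K4)
    (h13 : EOrth ε K1 K3) (h14 : EOrth ε K1 K4)
    (h23 : EOrth ε K2 K3) (h24 : EOrth ε K2 K4) :
    EOrth (deltaFun ε) (K1 ⊔ K2).topologicalClosure (K3 ⊔ K4).topologicalClosure := by
  have hε1 : ε < 1 := by linarith
  set c₁ := Real.sqrt 2 * ε / Real.sqrt (1 - ε) with hc₁def
  have hc₁ : 0 ≤ c₁ := div_nonneg (mul_nonneg (Real.sqrt_nonneg _) hε0) (Real.sqrt_nonneg _)
  have s1 : EOrth c₁ (K3 ⊔ K4).topologicalClosure K1 :=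
    eorth_sup_closure hε0 hε1 hε0 h34 h13.symm h14.symm
  have s2 : EOrth c₁ (K3 ⊔ K4).topologicalClosure K2 :=
    eorth_sup_closure hε0 hε1 hε0 h34 h23.symm h24.symm
  have s3 : EOrth (Real.sqrt 2 * c₁ / Real.sqrt (1 - ε)) (K1 ⊔ K2).topologicalClosure
      (K3 ⊔ K4).topologicalClosure :=
    eorth_sup_closure hε0 hε1 hc₁ h12 s1.symm s2.symm
  refine s3.mono ?_
  have hu : 0 < Real.sqrt (1 - ε) := Real.sqrt_pos.2 (by linarith)
  have hu2 : Real.sqrt (1 - ε) * Real.sqrt (1 - ε) = 1 - ε := Real.mul_self_sqrt (by linarith)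
  have h22 : Real.sqrt 2 * Real.sqrt 2 = 2 := Real.mul_self_sqrt (by norm_num)
  have heq : Real.sqrt 2 * c₁ / Real.sqrt (1 - ε) = 2 * ε / (1 - ε) := by
    have e : Real.sqrt 2 * (Real.sqrt 2 * ε / Real.sqrt (1 - ε)) / Real.sqrt (1 - ε)
        = Real.sqrt 2 * Real.sqrt 2 * ε / (Real.sqrt (1 - ε) * Real.sqrt (1 - ε)) := by
      field_simp
    rw [hc₁def, e, h22, hu2]
  rw [heq]
  exact two_div_le_deltaFun hε0 hε2

theorem pair_sum {ε : ℝ} (hε : 0 ≤ ε) {K L : Submodule ℂ H} [CompleteSpace K] [CompleteSpace L]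
    (h : EOrth ε K L) (ξ : H) :
    ‖(Submodule.orthogonalProjectionOnto K ξ : H)‖ ^ 2 + ‖(Submodule.orthogonalProjectionOnto L ξ : H)‖ ^ 2 ≤
      (1 + ε) * ‖(Submodule.orthogonalProjectionOnto (K ⊔ L).topologicalClosure ξ : H)‖ ^ 2 := by
  haveI : CompleteSpace ((K ⊔ L).topologicalClosure : Submodule ℂ H) :=
    (Submodule.isClosed_topologicalClosure _).completeSpace_coe
  set M := (K ⊔ L).topologicalClosure with hM
  set a : H := (Submodule.orthogonalProjectionOnto K ξ : H) with hadef
  set b : H := (Submodule.orthogonalProjectionOnto L ξ : H) with hbdef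
  set m : H := (Submodule.orthogonalProjectionOnto M ξ : H) with hmdef
  have haK : a ∈ K := SetLike.coe_mem _
  have hbL : b ∈ L := SetLike.coe_mem _
  have habM : a + b ∈ M := by
    have : a + b ∈ K ⊔ L := Submodule.add_mem_sup haK hbL
    exact (Submodule.le_topologicalClosure _) this
  have hia : ⟪ξ, a⟫ = (‖a‖ : ℂ) ^ 2 := by
    have h0 := Submodule.starProjection_inner_eq_zero (K := K) ξ a haK
    rw [inner_sub_left, sub_eq_zero] at h0
    rw [← Submodule.coe_orthogonalProjectionOnto_apply, ← hadef] at h0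
    rw [h0, inner_self_eq_norm_sq_to_K]
    norm_cast
  have hib : ⟪ξ, b⟫ = (‖b‖ : ℂ) ^ 2 := by
    have h0 := Submodule.starProjection_inner_eq_zero (K := L) ξ b hbL
    rw [inner_sub_left, sub_eq_zero] at h0
    rw [← Submodule.coe_orthogonalProjectionOnto_apply, ← hbdef] at h0
    rw [h0, inner_self_eq_norm_sq_to_K]
    norm_cast
  have him : ⟪ξ, a + b⟫ = ⟪m, a + b⟫ := by
    have h0 := Submodule.starProjection_inner_eq_zero (K := M) ξ (a + b) habM
    rw [inner_sub_left, sub_eq_zero] at h0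
    rw [← Submodule.coe_orthogonalProjectionOnto_apply, ← hmdef] at h0
    exact h0
  have hs : ‖a‖ ^ 2 + ‖b‖ ^ 2 = RCLike.re ⟪m, a + b⟫ := by
    rw [← him, inner_add_right, hia, hib]
    simp [← Complex.ofReal_pow]
  have hs1 : ‖a‖ ^ 2 + ‖b‖ ^ 2 ≤ ‖m‖ * ‖a + b‖ := by
    rw [hs]
    exact (RCLike.re_le_norm _).trans (norm_inner_le_norm _ _)
  have hub : ‖a + b‖ ^ 2 ≤ (1 + ε) * (‖a‖ ^ 2 + ‖b‖ ^ 2) := h.norm_add_sq_le hε haK hbL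
  set s := ‖a‖ ^ 2 + ‖b‖ ^ 2 with hsdef
  have hs0 : 0 ≤ s := by positivity
  rcases eq_or_lt_of_le hs0 with h0 | h0
  · rw [← h0]; positivity
  · have hmn : 0 ≤ ‖m‖ := norm_nonneg _
    have key : s * s ≤ ((1 + ε) * ‖m‖ ^ 2) * s := by
      have h1 : s * s ≤ (‖m‖ * ‖a + b‖) * (‖m‖ * ‖a + b‖) :=
        mul_self_le_mul_self hs0 hs1
      have h2 : (‖m‖ * ‖a + b‖) * (‖m‖ * ‖a + b‖) = ‖m‖ ^ 2 * ‖a + b‖ ^ 2 := by ring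
      nlinarith [sq_nonneg ‖m‖]
    exact le_of_mul_le_mul_right (by linarith [key]) h0

end Hilbert

section Main

variable {H : Type*} [NormedAddCommGroup H] [InnerProductSpace ℂ H] [CompleteSpace H]

theorem sum_range_double (f : ℕ → ℝ) (n : ℕ) :
    ∑ i ∈ Finset.range (2 * n), f i = ∑ i ∈ Finset.range n, (f (2 * i) + f (2 * i + 1)) := by
  induction n with
  | zero => simp
  | succ n ih =>
    rw [show 2 * (n + 1) = (2 * n + 1) + 1 by ring, Finset.sum_range_succ, Finset.sum_range_succ,
      Finset.sum_range_succ, ih]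
    ring

theorem orthogonalProjection_congr' {U V : Submodule ℂ H} [CompleteSpace U] [CompleteSpace V]
    (h : U = V) (ξ : H) :
    ((Submodule.orthogonalProjectionOnto U ξ : H)) = (Submodule.orthogonalProjectionOnto V ξ : H) := by
  subst h; rfl

theorem aux (ℓ : ℕ) (ε : ℝ) (K : ℕ → Submodule ℂ H) [inst : ∀ i, CompleteSpace (K i)]
    (hε0 : 0 ≤ ε) (hδ : ∀ j, j + 2 ≤ ℓ → deltaFun^[j] ε < 1 / 2)
    (horth : ∀ i j, i < 2 ^ ℓ → j < 2 ^ ℓ → i ≠ j → EOrth ε (K i) (K j)) (ξ : H) :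
    ∑ i ∈ Finset.range (2 ^ ℓ), ‖(Submodule.orthogonalProjectionOnto (K i) ξ : H)‖ ^ 2 ≤
      (∏ j ∈ Finset.range ℓ, (1 + deltaFun^[j] ε) ^ 2) *
        ‖(Submodule.orthogonalProjectionOnto
            (⨆ i ∈ Finset.range (2 ^ ℓ), K i : Submodule ℂ H).topologicalClosure ξ : H)‖ ^ 2 := by
  induction ℓ generalizing ε K with
  | zero =>
    haveI : CompleteSpace ((⨆ i ∈ Finset.range (2 ^ 0), K i : Submodule ℂ H).topologicalClosure) :=
      (Submodule.isClosed_topologicalClosure _).completeSpace_coe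
    have hle : K 0 ≤ (⨆ i ∈ Finset.range (2 ^ 0), K i : Submodule ℂ H).topologicalClosure := by
      refine le_trans ?_ (Submodule.le_topologicalClosure _)
      exact le_iSup₂ (f := fun i (_ : i ∈ Finset.range (2 ^ 0)) => K i) 0 (by simp)
    have h2 : ∀ x : H, ‖(Submodule.orthogonalProjectionOnto (K 0) x : H)‖ ≤ ‖x‖ := fun x => by
      have ha := (Submodule.orthogonalProjectionOnto (K 0)).le_opNorm x
      have h3 := Submodule.orthogonalProjectionOnto_norm_le (K 0)
      have h4 : ‖((Submodule.orthogonalProjectionOnto (K 0)) x : H)‖ = ‖(Submodule.orthogonalProjectionOnto (K 0)) x‖ := rfl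
      nlinarith [norm_nonneg x]
    have h1 : ‖(Submodule.orthogonalProjectionOnto (K 0) ξ : H)‖ ≤
        ‖(Submodule.orthogonalProjectionOnto
          (⨆ i ∈ Finset.range (2 ^ 0), K i : Submodule ℂ H).topologicalClosure ξ : H)‖ := by
      rw [← Submodule.orthogonalProjectionOnto_starProjection_of_le hle ξ]
      exact h2 _
    calc ∑ i ∈ Finset.range (2 ^ 0), ‖(Submodule.orthogonalProjectionOnto (K i) ξ : H)‖ ^ 2
        = ‖(Submodule.orthogonalProjectionOnto (K 0) ξ : H)‖ ^ 2 := by norm_num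
      _ ≤ ‖(Submodule.orthogonalProjectionOnto
            (⨆ i ∈ Finset.range (2 ^ 0), K i : Submodule ℂ H).topologicalClosure ξ : H)‖ ^ 2 :=
          pow_le_pow_left₀ (norm_nonneg _) h1 2
      _ = (∏ j ∈ Finset.range 0, (1 + deltaFun^[j] ε) ^ 2) *
            ‖(Submodule.orthogonalProjectionOnto
              (⨆ i ∈ Finset.range (2 ^ 0), K i : Submodule ℂ H).topologicalClosure ξ : H)‖ ^ 2 := by
          norm_num
  | succ ℓ ih =>
    have hpow : 2 ^ (ℓ + 1) = 2 * 2 ^ ℓ := by rw [pow_succ, Nat.mul_comm]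
    set L : ℕ → Submodule ℂ H := fun i => (K (2 * i) ⊔ K (2 * i + 1)).topologicalClosure with hLdef
    haveI instL : ∀ i, CompleteSpace (L i) := fun i =>
      (Submodule.isClosed_topologicalClosure _).completeSpace_coe
    have hδ0 : 0 ≤ deltaFun ε := deltaFun_nonneg hε0
    have hδ' : ∀ j, j + 2 ≤ ℓ → deltaFun^[j] (deltaFun ε) < 1 / 2 := by
      intro j hj
      rw [← Function.iterate_succ_apply]
      exact hδ (j + 1) (by omega)
    have horthL : ∀ i j, i < 2 ^ ℓ → j < 2 ^ ℓ → i ≠ j → EOrth (deltaFun ε) (L i) (L j) := by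
      intro i j hi hj hij
      rcases Nat.eq_zero_or_pos ℓ with h0 | h0
      · subst h0; simp at hi hj; omega
      · have hε2 : ε < 1 / 2 := by simpa using hδ 0 (by omega)
        apply pair_combine hε0 hε2 <;> apply horth <;> omega
    have hpair : ∀ i, i < 2 ^ ℓ →
        ‖(Submodule.orthogonalProjectionOnto (K (2 * i)) ξ : H)‖ ^ 2
          + ‖(Submodule.orthogonalProjectionOnto (K (2 * i + 1)) ξ : H)‖ ^ 2 ≤
          (1 + ε) * ‖(Submodule.orthogonalProjectionOnto (L i) ξ : H)‖ ^ 2 := by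
      intro i hi
      exact pair_sum hε0 (horth (2 * i) (2 * i + 1) (by omega) (by omega) (by omega)) ξ
    have hEq : (⨆ i ∈ Finset.range (2 ^ ℓ), L i : Submodule ℂ H).topologicalClosure
        = (⨆ i ∈ Finset.range (2 ^ (ℓ + 1)), K i : Submodule ℂ H).topologicalClosure := by
      apply le_antisymm
      · apply Submodule.topologicalClosure_minimal
        · apply iSup₂_le
          intro i hi
          have hi' : i < 2 ^ ℓ := Finset.mem_range.1 hi
          refine Submodule.topologicalClosure_mono (sup_le ?_ ?_)
          · exact le_iSup₂ (f := fun i (_ : i ∈ Finset.range (2 ^ (ℓ + 1))) => K i) (2 * i)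
              (Finset.mem_range.2 (by omega))
          · exact le_iSup₂ (f := fun i (_ : i ∈ Finset.range (2 ^ (ℓ + 1))) => K i) (2 * i + 1)
              (Finset.mem_range.2 (by omega))
        · exact Submodule.isClosed_topologicalClosure _
      · refine Submodule.topologicalClosure_mono (iSup₂_le fun j hj => ?_)
        have hj' : j < 2 ^ (ℓ + 1) := Finset.mem_range.1 hj
        have hhalf : j / 2 < 2 ^ ℓ := by omega
        have hKle : K j ≤ L (j / 2) := by
          refine le_trans ?_ (Submodule.le_topologicalClosure _)
          rcases Nat.even_or_odd j with ⟨m, hm⟩ | ⟨m, hm⟩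
          · have e : 2 * (j / 2) = j := by omega
            rw [e]
            exact le_sup_left
          · have e : 2 * (j / 2) + 1 = j := by omega
            rw [e]
            exact le_sup_right
        exact hKle.trans (le_iSup₂ (f := fun i (_ : i ∈ Finset.range (2 ^ ℓ)) => L i) (j / 2)
          (Finset.mem_range.2 hhalf))
    haveI : CompleteSpace
        ((⨆ i ∈ Finset.range (2 ^ (ℓ + 1)), K i : Submodule ℂ H).topologicalClosure) :=
      (Submodule.isClosed_topologicalClosure _).completeSpace_coe
    have hN : (0:ℝ) ≤ ‖(Submodule.orthogonalProjectionOnto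
        (⨆ i ∈ Finset.range (2 ^ (ℓ + 1)), K i : Submodule ℂ H).topologicalClosure ξ : H)‖ ^ 2 :=
      sq_nonneg _
    have hP : (0:ℝ) ≤ ∏ j ∈ Finset.range ℓ, (1 + deltaFun^[j] (deltaFun ε)) ^ 2 :=
      Finset.prod_nonneg fun j _ => sq_nonneg _
    calc ∑ i ∈ Finset.range (2 ^ (ℓ + 1)), ‖(Submodule.orthogonalProjectionOnto (K i) ξ : H)‖ ^ 2
        = ∑ i ∈ Finset.range (2 ^ ℓ), (‖(Submodule.orthogonalProjectionOnto (K (2 * i)) ξ : H)‖ ^ 2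
            + ‖(Submodule.orthogonalProjectionOnto (K (2 * i + 1)) ξ : H)‖ ^ 2) := by
          rw [hpow, sum_range_double]
      _ ≤ ∑ i ∈ Finset.range (2 ^ ℓ), (1 + ε) * ‖(Submodule.orthogonalProjectionOnto (L i) ξ : H)‖ ^ 2 :=
          Finset.sum_le_sum fun i hi => hpair i (Finset.mem_range.1 hi)
      _ = (1 + ε) * ∑ i ∈ Finset.range (2 ^ ℓ), ‖(Submodule.orthogonalProjectionOnto (L i) ξ : H)‖ ^ 2 := by
          rw [Finset.mul_sum]
      _ ≤ (1 + ε) * ((∏ j ∈ Finset.range ℓ, (1 + deltaFun^[j] (deltaFun ε)) ^ 2) *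
            ‖(Submodule.orthogonalProjectionOnto
              (⨆ i ∈ Finset.range (2 ^ ℓ), L i : Submodule ℂ H).topologicalClosure ξ : H)‖ ^ 2) :=
          mul_le_mul_of_nonneg_left (ih (deltaFun ε) L hδ0 hδ' horthL) (by linarith)
      _ = (1 + ε) * ((∏ j ∈ Finset.range ℓ, (1 + deltaFun^[j] (deltaFun ε)) ^ 2) *
            ‖(Submodule.orthogonalProjectionOnto
              (⨆ i ∈ Finset.range (2 ^ (ℓ + 1)), K i : Submodule ℂ H).topologicalClosure ξ : H)‖ ^ 2) := by
          rw [orthogonalProjection_congr' hEq ξ]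
      _ ≤ (∏ j ∈ Finset.range (ℓ + 1), (1 + deltaFun^[j] ε) ^ 2) *
            ‖(Submodule.orthogonalProjectionOnto
              (⨆ i ∈ Finset.range (2 ^ (ℓ + 1)), K i : Submodule ℂ H).topologicalClosure ξ : H)‖ ^ 2 := by
          have hprodeq : ∏ j ∈ Finset.range (ℓ + 1), (1 + deltaFun^[j] ε) ^ 2
              = (∏ j ∈ Finset.range ℓ, (1 + deltaFun^[j] (deltaFun ε)) ^ 2) * (1 + ε) ^ 2 := by
            rw [Finset.prod_range_succ']
            simp only [Function.iterate_succ_apply, Function.iterate_zero_apply]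
          rw [hprodeq]
          nlinarith [mul_nonneg (mul_nonneg hP hN) (mul_nonneg (by linarith : (0:ℝ) ≤ 1 + ε) hε0)]

end Main

/-- Proposition 2.3: if `K₁, …, K_{2^k}` are pairwise `ε`-orthogonal closed subspaces
with projections `pᵢ`, and `P_ℓ` is the projection onto the closure of
`K₁ + ⋯ + K_{2^ℓ}`, then `Σ_{i=1}^{2^ℓ} ‖pᵢξ‖² ≤ ∏_{j=0}^{ℓ-1} (1 + δ^{∘j}(ε))² ‖P_ℓ ξ‖²`. -/
theorem sum_norm_sq_proj_le_of_pairwise_epsilon_orthogonal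
    {H : Type*} [NormedAddCommGroup H] [InnerProductSpace ℂ H] [CompleteSpace H]
    (k : ℕ) (hk : 1 ≤ k)
    (ε : ℝ) (hε₀ : 0 ≤ ε) (hε₁ : ε < 1 / 2)
    (hiter : ∀ j, j ≤ k - 2 → deltaFun^[j] ε < 1 / 2)
    (hlast : deltaFun^[k - 1] ε < 1)
    (K : ℕ → Submodule ℂ H)
    (hKclosed : ∀ i, IsClosed ((K i : Set H)))
    [∀ i, CompleteSpace (K i)]
    (horth : ∀ i j, i < 2 ^ k → j < 2 ^ k → i ≠ j →
      ∀ ξ ∈ K i, ∀ η ∈ K j, ‖⟪ξ, η⟫‖ ≤ ε * ‖ξ‖ * ‖η‖) :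
    ∀ ℓ, 1 ≤ ℓ → ℓ ≤ k → ∀ ξ : H,
      ∑ i ∈ Finset.range (2 ^ ℓ), ‖(Submodule.orthogonalProjectionOnto (K i) ξ : H)‖ ^ 2 ≤
        (∏ j ∈ Finset.range ℓ, (1 + deltaFun^[j] ε) ^ 2) *
          ‖(Submodule.orthogonalProjectionOnto
              (⨆ i ∈ Finset.range (2 ^ ℓ), K i : Submodule ℂ H).topologicalClosure ξ : H)‖ ^ 2 := by
  intro ℓ hℓ1 hℓk ξ
  have h2 : 2 ^ ℓ ≤ 2 ^ k := Nat.pow_le_pow_right (by norm_num) hℓk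
  exact aux ℓ ε K hε₀ (fun j hj => hiter j (by omega))
    (fun i j hi hj hij => horth i j (lt_of_lt_of_le hi h2) (lt_of_lt_of_le hj h2) hij) ξ
end

section
/- Let H be a complex Hilbert space, X a closed subspace with orthogonal projection P_X, and k ≥ 1. Let 0 ≤ ε < 1/2 be such that the iterates δ^{∘j}(ε) are defined with δ^{∘j}(ε) < 1/2 for all 0 ≤ j ≤ k − 2, δ^{∘(k−1)}(ε) < 1, and ∏_{j=0}^{k−1} (1 + δ^{∘j}(ε))² ≤ 2. Let 𝒢 be a set of 2^k unitary operators on H such that for all U ≠ V in 𝒢 the subspaces U(X) and V(X) are ε-orthogonal. Then for every ξ ∈ H one has 2^k·‖P_X ξ‖² ≤ 2·Σ_{U ∈ 𝒢} ‖Uξ − ξ‖² + 4·‖ξ‖². -/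
open scoped ComplexInnerProductSpace

/-- On `[0, 1/2)` the function `δ` satisfies `δ(x) ≥ 2x`. -/
lemma two_mul_le_deltaFun {x : ℝ} (hx0 : 0 ≤ x) (hx : x < 1/2) : 2 * x ≤ deltaFun x := by
  unfold deltaFun
  set t := Real.sqrt (1 - x) with ht
  have ht0 : 0 ≤ t := Real.sqrt_nonneg _
  have ht2 : t ^ 2 = 1 - x := Real.sq_sqrt (by linarith)
  set s := Real.sqrt 2 with hs
  have hs0 : 0 ≤ s := Real.sqrt_nonneg _
  have hs2 : s ^ 2 = 2 := Real.sq_sqrt (by norm_num)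
  have hxt : 0 ≤ s * x * t := by positivity
  have hsq : (s * x * t) ^ 2 = 2 * x ^ 2 * (1 - x) := by
    rw [mul_pow, mul_pow, hs2, ht2]
  have hkey : (s * x * t) ^ 2 < (1 - x) ^ 2 := by
    rw [hsq]
    nlinarith [mul_pos (mul_pos (show (0:ℝ) < 1 - x by linarith)
      (show (0:ℝ) < 1 - 2*x by linarith)) (show (0:ℝ) < 1 + x by linarith)]
  have hr : 0 < 1 - x - s * x * t := by nlinarith
  have hD0 : 0 < Real.sqrt (1 - x - s * x * t) := Real.sqrt_pos.mpr hr
  have hD1 : Real.sqrt (1 - x - s * x * t) ≤ 1 := Real.sqrt_le_one.mpr (by linarith)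
  rw [le_div_iff₀ hD0]
  nlinarith

set_option maxHeartbeats 1000000 in
/-- If `𝒢` is a set of `2^k` unitaries of a complex Hilbert space `H` such that the
images `U(X)`, `V(X)` of a closed subspace `X` are pairwise `ε`-orthogonal (with the
iterates of `δ` at `ε` suitably controlled and `∏_{j<k} (1 + δ^{∘j}(ε))² ≤ 2`), then
`2^k ‖P_X ξ‖² ≤ 2 Σ_{U ∈ 𝒢} ‖Uξ - ξ‖² + 4 ‖ξ‖²` for every `ξ ∈ H`. -/
theorem pow_mul_norm_sq_proj_le_of_unitaries
    {H : Type*} [NormedAddCommGroup H] [InnerProductSpace ℂ H] [CompleteSpace H]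
    (X : Submodule ℂ H) (hX : IsClosed (X : Set H)) [CompleteSpace X]
    (k : ℕ) (hk : 1 ≤ k)
    (ε : ℝ) (hε₀ : 0 ≤ ε) (hε₁ : ε < 1 / 2)
    (hiter : ∀ j, j ≤ k - 2 → deltaFun^[j] ε < 1 / 2)
    (hlast : deltaFun^[k - 1] ε < 1)
    (hprod : ∏ j ∈ Finset.range k, (1 + deltaFun^[j] ε) ^ 2 ≤ 2)
    (𝒢 : Finset (H ≃ₗᵢ[ℂ] H)) (hcard : 𝒢.card = 2 ^ k)
    (horth : ∀ U ∈ 𝒢, ∀ V ∈ 𝒢, U ≠ V →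
      ∀ ξ ∈ U '' (X : Set H), ∀ η ∈ V '' (X : Set H), ‖⟪ξ, η⟫‖ ≤ ε * ‖ξ‖ * ‖η‖) :
    ∀ ξ : H,
      (2 : ℝ) ^ k * ‖(X.orthogonalProjection ξ : H)‖ ^ 2 ≤
        2 * ∑ U ∈ 𝒢, ‖U ξ - ξ‖ ^ 2 + 4 * ‖ξ‖ ^ 2 := by
  classical
  -- Step 1: the iterates of `deltaFun` grow at least geometrically.
  have hgrow : ∀ j, j ≤ k - 1 → 2 ^ j * ε ≤ deltaFun^[j] ε := by
    intro j
    induction j with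
    | zero => intro _; simp
    | succ n ih =>
      intro hn
      have h1 := ih (by omega)
      have hnn : (0:ℝ) ≤ deltaFun^[n] ε := le_trans (by positivity) h1
      have hlt : deltaFun^[n] ε < 1/2 := hiter n (by omega)
      have h2 := two_mul_le_deltaFun hnn hlt
      rw [Function.iterate_succ_apply']
      calc (2:ℝ) ^ (n+1) * ε = 2 * (2 ^ n * ε) := by ring
        _ ≤ 2 * deltaFun^[n] ε := by linarith
        _ ≤ deltaFun (deltaFun^[n] ε) := h2
  -- Step 2: the product hypothesis forces `ε * 2 ^ k ≤ 1`.
  have hεk : ε * 2 ^ k ≤ 1 := by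
    have hfac : ∀ j ∈ Finset.range k, (1:ℝ) ≤ (1 + deltaFun^[j] ε) ^ 2 := by
      intro j hj
      rw [Finset.mem_range] at hj
      have h0 : (0:ℝ) ≤ deltaFun^[j] ε :=
        le_trans (by positivity) (hgrow j (by omega))
      nlinarith
    have hmem : k - 1 ∈ Finset.range k := by
      rw [Finset.mem_range]; omega
    have herase : (1:ℝ) ≤ ∏ j ∈ (Finset.range k).erase (k-1), (1 + deltaFun^[j] ε) ^ 2 := by
      have h := Finset.prod_le_prod (s := (Finset.range k).erase (k-1))
        (f := fun _ => (1:ℝ)) (g := fun j => (1 + deltaFun^[j] ε) ^ 2)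
        (fun _ _ => zero_le_one) (fun j hj => hfac j (Finset.mem_of_mem_erase hj))
      simpa using h
    have hsplit := Finset.mul_prod_erase (Finset.range k)
      (fun j => (1 + deltaFun^[j] ε) ^ 2) hmem
    have hsplit' : (1 + deltaFun^[k-1] ε) ^ 2 *
        ∏ j ∈ (Finset.range k).erase (k-1), (1 + deltaFun^[j] ε) ^ 2
        = ∏ j ∈ Finset.range k, (1 + deltaFun^[j] ε) ^ 2 := hsplit
    have hone : (1 + deltaFun^[k-1] ε) ^ 2 ≤ 2 := by
      nlinarith [sq_nonneg (1 + deltaFun^[k-1] ε),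
        mul_nonneg (sq_nonneg (1 + deltaFun^[k-1] ε)) (show (0:ℝ) ≤
          (∏ j ∈ (Finset.range k).erase (k-1), (1 + deltaFun^[j] ε) ^ 2) - 1 by linarith)]
    have hd0 : (0:ℝ) ≤ deltaFun^[k-1] ε :=
      le_trans (by positivity) (hgrow (k-1) le_rfl)
    have hhalf : deltaFun^[k-1] ε ≤ 1/2 := by nlinarith
    have h3 : (2:ℝ) ^ (k-1) * ε ≤ 1/2 := le_trans (hgrow (k-1) le_rfl) hhalf
    have h4 : (2:ℝ) ^ k = 2 * 2 ^ (k-1) := by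
      rw [← pow_succ']
      congr 1
      omega
    rw [h4]
    nlinarith
  intro ξ
  -- `η U` is the orthogonal projection of `ξ` onto `U(X)`.
  set η : (H ≃ₗᵢ[ℂ] H) → H := fun U => U (X.orthogonalProjection (U.symm ξ)) with hη
  have hmemUX : ∀ U : H ≃ₗᵢ[ℂ] H, η U ∈ U '' (X : Set H) :=
    fun U => ⟨X.orthogonalProjection (U.symm ξ), (X.orthogonalProjection (U.symm ξ)).2, rfl⟩
  have hnormη : ∀ U : H ≃ₗᵢ[ℂ] H, ‖η U‖ = ‖(X.orthogonalProjection (U.symm ξ) : H)‖ :=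
    fun U => U.norm_map _
  -- `⟪ξ, η U⟫ = ‖η U‖ ^ 2`.
  have hinner : ∀ U : H ≃ₗᵢ[ℂ] H, ⟪ξ, η U⟫ = ((‖η U‖ : ℂ)) ^ 2 := by
    intro U
    have h1 : ⟪ξ, η U⟫ = ⟪U.symm ξ, (X.orthogonalProjection (U.symm ξ) : H)⟫ := by
      conv_lhs => rw [← U.apply_symm_apply ξ]
      exact U.inner_map_map _ _
    have h2 : ⟪U.symm ξ - (X.orthogonalProjection (U.symm ξ) : H),
        (X.orthogonalProjection (U.symm ξ) : H)⟫ = 0 :=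
      Submodule.starProjection_inner_eq_zero (K := X) (U.symm ξ)
      (X.orthogonalProjection (U.symm ξ) : H) (X.orthogonalProjection (U.symm ξ)).2
    rw [inner_sub_left, sub_eq_zero] at h2
    rw [h1, h2, inner_self_eq_norm_sq_to_K, hnormη U]
    norm_cast
  -- triangle inequality relating `P_X ξ` with `η U`.
  have hproj_le : ∀ U : H ≃ₗᵢ[ℂ] H,
      ‖(X.orthogonalProjection ξ : H)‖ ≤ ‖η U‖ + ‖U ξ - ξ‖ := by
    intro U
    have hLip : ‖(X.orthogonalProjection ξ : H) - (X.orthogonalProjection (U.symm ξ) : H)‖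
        ≤ ‖ξ - U.symm ξ‖ := by
      have e1 : (X.orthogonalProjection ξ : H) - (X.orthogonalProjection (U.symm ξ) : H)
          = ((X.orthogonalProjection (ξ - U.symm ξ) : X) : H) := by
        rw [map_sub]; push_cast; ring
      rw [e1]
      calc ‖((X.orthogonalProjection (ξ - U.symm ξ) : X) : H)‖
          = ‖X.orthogonalProjection (ξ - U.symm ξ)‖ := rfl
        _ ≤ ‖X.orthogonalProjection‖ * ‖ξ - U.symm ξ‖ :=
            (X.orthogonalProjection).le_opNorm _
        _ ≤ ‖ξ - U.symm ξ‖ :=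
            mul_le_of_le_one_left (norm_nonneg _) (Submodule.orthogonalProjectionOnto_norm_le X)
    have hsym : ‖ξ - U.symm ξ‖ = ‖U ξ - ξ‖ := by
      rw [← U.norm_map (ξ - U.symm ξ), map_sub, U.apply_symm_apply]
    have htri := norm_sub_norm_le ((X.orthogonalProjection ξ : H))
      ((X.orthogonalProjection (U.symm ξ) : H))
    rw [hnormη U]
    linarith [hLip, htri, hsym.le, hsym.ge]
  set S : ℝ := ∑ U ∈ 𝒢, ‖η U‖ ^ 2 with hSdef
  have hS0 : 0 ≤ S := Finset.sum_nonneg fun _ _ => sq_nonneg _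
  -- `S ≤ ‖ξ‖ * ‖Σ η U‖`.
  have hc : S ≤ ‖ξ‖ * ‖∑ U ∈ 𝒢, η U‖ := by
    have h1 : ⟪ξ, ∑ U ∈ 𝒢, η U⟫ = ((S : ℂ)) := by
      rw [inner_sum]
      rw [hSdef]
      push_cast
      exact Finset.sum_congr rfl fun U _ => hinner U
    have h2 := norm_inner_le_norm (𝕜 := ℂ) ξ (∑ U ∈ 𝒢, η U)
    rw [h1] at h2
    rwa [Complex.norm_real, Real.norm_of_nonneg hS0] at h2
  -- `‖Σ η U‖ ^ 2 ≤ 2 S` via almost-orthogonality.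
  have hd : ‖∑ U ∈ 𝒢, η U‖ ^ 2 ≤ 2 * S := by
    have h1 : (‖∑ U ∈ 𝒢, η U‖ ^ 2 : ℝ)
        = ‖⟪∑ U ∈ 𝒢, η U, ∑ V ∈ 𝒢, η V⟫‖ := by
      rw [inner_self_eq_norm_sq_to_K, norm_pow, RCLike.norm_ofReal, abs_norm]
    have h2 : ⟪∑ U ∈ 𝒢, η U, ∑ V ∈ 𝒢, η V⟫ = ∑ U ∈ 𝒢, ∑ V ∈ 𝒢, ⟪η U, η V⟫ := by
      rw [sum_inner]
      exact Finset.sum_congr rfl fun U _ => inner_sum _ _ _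
    have hpair : ∀ U ∈ 𝒢, ∀ V ∈ 𝒢, ‖⟪η U, η V⟫‖
        ≤ ε * ‖η U‖ * ‖η V‖ + (if U = V then ‖η U‖ ^ 2 else 0) := by
      intro U hU V hV
      by_cases hUV : U = V
      · subst hUV
        rw [if_pos rfl]
        have hb := norm_inner_le_norm (𝕜 := ℂ) (η U) (η U)
        nlinarith [norm_nonneg (η U), mul_nonneg (mul_nonneg hε₀ (norm_nonneg (η U))) (norm_nonneg (η U))]
      · simp only [if_neg hUV, add_zero]
        exact horth U hU V hV hUV (η U) (hmemUX U) (η V) (hmemUX V)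
    calc ‖∑ U ∈ 𝒢, η U‖ ^ 2 = ‖∑ U ∈ 𝒢, ∑ V ∈ 𝒢, ⟪η U, η V⟫‖ := by rw [h1, h2]
      _ ≤ ∑ U ∈ 𝒢, ‖∑ V ∈ 𝒢, ⟪η U, η V⟫‖ := norm_sum_le _ _
      _ ≤ ∑ U ∈ 𝒢, ∑ V ∈ 𝒢, ‖⟪η U, η V⟫‖ :=
          Finset.sum_le_sum fun U _ => norm_sum_le _ _
      _ ≤ ∑ U ∈ 𝒢, ∑ V ∈ 𝒢, (ε * ‖η U‖ * ‖η V‖ + (if U = V then ‖η U‖ ^ 2 else 0)) :=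
          Finset.sum_le_sum fun U hU => Finset.sum_le_sum fun V hV => hpair U hU V hV
      _ = ε * (∑ U ∈ 𝒢, ‖η U‖) ^ 2 + S := by
          have e1 : ∀ U ∈ 𝒢,
              (∑ V ∈ 𝒢, (ε * ‖η U‖ * ‖η V‖ + (if U = V then ‖η U‖ ^ 2 else 0)))
              = ε * ‖η U‖ * (∑ V ∈ 𝒢, ‖η V‖) + ‖η U‖ ^ 2 := fun U hU => by
            rw [Finset.sum_add_distrib, Finset.sum_ite_eq 𝒢 U fun _ => ‖η U‖ ^ 2,
              if_pos hU, ← Finset.mul_sum]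
          rw [Finset.sum_congr rfl e1, Finset.sum_add_distrib, ← Finset.sum_mul,
            ← Finset.mul_sum]
          ring
      _ ≤ 2 * S := by
          have hcs : (∑ U ∈ 𝒢, ‖η U‖) ^ 2 ≤ (𝒢.card : ℝ) * S := by
            have := sq_sum_le_card_mul_sum_sq (s := 𝒢) (f := fun U => ‖η U‖)
            simpa [hSdef] using this
          have hsum0 : (0:ℝ) ≤ (∑ U ∈ 𝒢, ‖η U‖) ^ 2 := sq_nonneg _
          have : ε * (∑ U ∈ 𝒢, ‖η U‖) ^ 2 ≤ ε * ((2:ℝ) ^ k * S) := by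
            apply mul_le_mul_of_nonneg_left _ hε₀
            rw [hcard] at hcs
            push_cast at hcs
            exact hcs
          nlinarith [mul_le_mul_of_nonneg_right hεk hS0]
  -- Combine: `S ≤ 2 ‖ξ‖ ^ 2`.
  have hSle : S ≤ 2 * ‖ξ‖ ^ 2 := by
    rcases eq_or_lt_of_le hS0 with h | h
    · nlinarith [sq_nonneg ‖ξ‖]
    · have hsq : S ^ 2 ≤ ‖ξ‖ ^ 2 * ‖∑ U ∈ 𝒢, η U‖ ^ 2 := by
        have := mul_le_mul hc hc hS0 (by positivity)
        calc S ^ 2 = S * S := sq S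
          _ ≤ (‖ξ‖ * ‖∑ U ∈ 𝒢, η U‖) * (‖ξ‖ * ‖∑ U ∈ 𝒢, η U‖) := this
          _ = ‖ξ‖ ^ 2 * ‖∑ U ∈ 𝒢, η U‖ ^ 2 := by ring
      have h2 : S ^ 2 ≤ ‖ξ‖ ^ 2 * (2 * S) :=
        le_trans hsq (mul_le_mul_of_nonneg_left hd (sq_nonneg _))
      nlinarith
  -- Final computation.
  calc (2 : ℝ) ^ k * ‖(X.orthogonalProjection ξ : H)‖ ^ 2
      = ∑ _U ∈ 𝒢, ‖(X.orthogonalProjection ξ : H)‖ ^ 2 := by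
        rw [Finset.sum_const, hcard, nsmul_eq_mul]
        push_cast
        ring
    _ ≤ ∑ U ∈ 𝒢, (2 * ‖η U‖ ^ 2 + 2 * ‖U ξ - ξ‖ ^ 2) := by
        apply Finset.sum_le_sum
        intro U _
        have h1 := hproj_le U
        have h2 : (0:ℝ) ≤ ‖(X.orthogonalProjection ξ : H)‖ := norm_nonneg _
        nlinarith [sq_nonneg (‖η U‖ - ‖U ξ - ξ‖), norm_nonneg (η U), norm_nonneg (U ξ - ξ)]
    _ = 2 * S + 2 * ∑ U ∈ 𝒢, ‖U ξ - ξ‖ ^ 2 := by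
        rw [Finset.sum_add_distrib, ← Finset.mul_sum, ← Finset.mul_sum]
    _ ≤ 2 * ∑ U ∈ 𝒢, ‖U ξ - ξ‖ ^ 2 + 4 * ‖ξ‖ ^ 2 := by linarith
end

section
/- Let G be an infinite countable discrete group and π : G → U(H) a mixing unitary representation on a complex Hilbert space H. Let (e_n)_{n∈ℕ} be a bounded sequence in H such that for every g ∈ G, ‖π(g)e_n − e_n‖ → 0 as n → ∞. Then e_n converges to 0 weakly, i.e., ⟨e_n, η⟩ → 0 for every η ∈ H. -/
open scoped ComplexInnerProductSpace Pointwise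

lemma exists_separated {G : Type*} [Group G] [DecidableEq G] [Infinite G] (S : Set G)
    (hS : S.Finite) :
    ∀ N : ℕ, ∃ F : Finset G, F.card = N ∧ ∀ g ∈ F, ∀ h ∈ F, g ≠ h → h * g⁻¹ ∉ S := by
  intro N
  induction N with
  | zero => exact ⟨∅, rfl, by simp⟩
  | succ n ih =>
    obtain ⟨F, hcard, hsep⟩ := ih
    have hbad : (↑F ∪ (S * ↑F) ∪ (S⁻¹ * ↑F) : Set G).Finite :=
      ((F.finite_toSet.union (hS.mul F.finite_toSet)).union (hS.inv.mul F.finite_toSet))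
    obtain ⟨x, hx⟩ := hbad.infinite_compl.nonempty
    simp only [Set.mem_compl_iff, Set.mem_union, not_or] at hx
    obtain ⟨⟨hx1, hx2⟩, hx3⟩ := hx
    have hxF : x ∉ F := by simpa using hx1
    refine ⟨insert x F, by rw [Finset.card_insert_of_notMem hxF, hcard], ?_⟩
    intro g hg h hh hne
    simp only [Finset.mem_insert] at hg hh
    rcases hg with rfl | hg <;> rcases hh with rfl | hh
    · exact absurd rfl hne
    · intro hmem
      exact hx3 ⟨(h * g⁻¹)⁻¹, by simpa using hmem, h, hh, by group⟩
    · intro hmem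
      exact hx2 ⟨h * g⁻¹, hmem, g, hg, by group⟩
    · exact hsep g hg h hh hne

set_option maxHeartbeats 800000 in
/-- For a mixing unitary representation of an infinite countable discrete group,
any bounded asymptotically invariant sequence converges weakly to `0`. -/
theorem tendsto_inner_zero_of_asymptotically_invariant
    {G : Type*} [Group G] [Countable G] [Infinite G]
    {H : Type*} [NormedAddCommGroup H] [InnerProductSpace ℂ H] [CompleteSpace H]
    (π : G →* (H ≃ₗᵢ[ℂ] H))
    (hmix : ∀ ξ η : H, Filter.Tendsto (fun g : G => ⟪π g ξ, η⟫)
      Filter.cofinite (nhds 0))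
    (e : ℕ → H) (C : ℝ) (hbdd : ∀ n, ‖e n‖ ≤ C)
    (hinv : ∀ g : G, Filter.Tendsto (fun n => ‖π g (e n) - e n‖)
      Filter.atTop (nhds 0)) :
    ∀ η : H, Filter.Tendsto (fun n => ⟪e n, η⟫) Filter.atTop (nhds 0) := by
  classical
  intro η
  -- key identity: ⟪π g x, η⟫ = ⟪x, π g⁻¹ η⟫
  have key : ∀ (g : G) (x y : H), ⟪π g x, y⟫ = ⟪x, π g⁻¹ y⟫ := by
    intro g x y
    have h1 : π g (π g⁻¹ y) = y := by
      have : π g * π g⁻¹ = 1 := by rw [← map_mul, mul_inv_cancel, map_one]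
      calc π g (π g⁻¹ y) = (π g * π g⁻¹) y := rfl
        _ = y := by rw [this]; rfl
    conv_rhs => rw [← (π g).inner_map_map x (π g⁻¹ y), h1]
  rw [NormedAddCommGroup.tendsto_nhds_zero]
  intro ε hε
  have hC0 : 0 ≤ C := le_trans (norm_nonneg _) (hbdd 0)
  obtain ⟨B, hB⟩ : ∃ B : ℝ, B = C ^ 2 + 1 := ⟨_, rfl⟩
  have hB0 : 0 < B := by rw [hB]; positivity
  obtain ⟨δ, hδ⟩ : ∃ δ : ℝ, δ = ε ^ 2 / (8 * B) := ⟨_, rfl⟩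
  have hδ0 : 0 < δ := by rw [hδ]; positivity
  -- choose N
  obtain ⟨N₀, hN₀⟩ := exists_nat_ge (8 * B * ‖η‖ ^ 2 / ε ^ 2)
  obtain ⟨N, hNdef⟩ : ∃ N : ℕ, N = N₀ + 1 := ⟨_, rfl⟩
  have hN1 : (1 : ℝ) ≤ N := by rw [hNdef]; exact_mod_cast Nat.le_add_left 1 N₀
  have hNpos : (0 : ℝ) < N := by linarith
  have hNbig : 8 * B * ‖η‖ ^ 2 ≤ (N : ℝ) * ε ^ 2 := by
    have : 8 * B * ‖η‖ ^ 2 / ε ^ 2 ≤ (N : ℝ) := by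
      refine le_trans hN₀ ?_
      rw [hNdef]; exact_mod_cast Nat.le_succ N₀
    calc 8 * B * ‖η‖ ^ 2 = (8 * B * ‖η‖ ^ 2 / ε ^ 2) * ε ^ 2 := by
          field_simp
      _ ≤ (N : ℝ) * ε ^ 2 := by
          exact mul_le_mul_of_nonneg_right this (by positivity)
  -- bad set from mixing
  have hSfin : {g : G | ¬ ‖⟪π g η, η⟫‖ < δ}.Finite := by
    have h := Metric.tendsto_nhds.mp (hmix η η) δ hδ0
    rw [Filter.eventually_cofinite] at h
    simpa [dist_zero_right] using h
  obtain ⟨F, hFcard, hFsep⟩ := exists_separated _ hSfin N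
  set v : H := ∑ g ∈ F, π g⁻¹ η with hv
  -- bound on ‖v‖²
  have hv2 : ‖v‖ ^ 2 ≤ (N : ℝ) * ‖η‖ ^ 2 + (N : ℝ) ^ 2 * δ := by
    have hvv : ⟪v, v⟫ = ∑ g ∈ F, ∑ h ∈ F, ⟪π g⁻¹ η, π h⁻¹ η⟫ := by
      rw [hv, sum_inner]
      exact Finset.sum_congr rfl fun g _ => inner_sum _ _ _
    have hnorm : ‖v‖ ^ 2 = ‖⟪v, v⟫‖ := by
      rw [inner_self_eq_norm_sq_to_K]
      simp [← Complex.ofReal_pow]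
    rw [hnorm, hvv]
    calc ‖∑ g ∈ F, ∑ h ∈ F, ⟪π g⁻¹ η, π h⁻¹ η⟫‖
        ≤ ∑ g ∈ F, ‖∑ h ∈ F, ⟪π g⁻¹ η, π h⁻¹ η⟫‖ := norm_sum_le _ _
      _ ≤ ∑ g ∈ F, (‖η‖ ^ 2 + (N : ℝ) * δ) := by
          refine Finset.sum_le_sum fun g hg => ?_
          calc ‖∑ h ∈ F, ⟪π g⁻¹ η, π h⁻¹ η⟫‖
              ≤ ∑ h ∈ F, ‖⟪π g⁻¹ η, π h⁻¹ η⟫‖ := norm_sum_le _ _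
            _ = ‖⟪π g⁻¹ η, π g⁻¹ η⟫‖ + ∑ h ∈ F.erase g, ‖⟪π g⁻¹ η, π h⁻¹ η⟫‖ :=
                (Finset.add_sum_erase _ _ hg).symm
            _ ≤ ‖η‖ ^ 2 + (N : ℝ) * δ := by
                have hdiag : ‖⟪π g⁻¹ η, π g⁻¹ η⟫‖ = ‖η‖ ^ 2 := by
                  rw [inner_self_eq_norm_sq_to_K]
                  simp [← Complex.ofReal_pow, (π g⁻¹).norm_map]
                have hoff : ∀ h ∈ F.erase g, ‖⟪π g⁻¹ η, π h⁻¹ η⟫‖ ≤ δ := by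
                  intro h hh
                  have hhF := Finset.mem_of_mem_erase hh
                  have hne : g ≠ h := fun hEq => (Finset.ne_of_mem_erase hh) hEq.symm
                  have : ⟪π g⁻¹ η, π h⁻¹ η⟫ = ⟪π (h * g⁻¹) η, η⟫ := by
                    rw [← key h (π g⁻¹ η) η, map_mul]
                    rfl
                  rw [this]
                  have := hFsep g hg h hhF hne
                  have hlt : ‖⟪π (h * g⁻¹) η, η⟫‖ < δ := by
                    by_contra hcon
                    exact this hcon
                  exact le_of_lt hlt
                calc ‖⟪π g⁻¹ η, π g⁻¹ η⟫‖ + ∑ h ∈ F.erase g, ‖⟪π g⁻¹ η, π h⁻¹ η⟫‖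
                    ≤ ‖η‖ ^ 2 + (F.erase g).card * δ := by
                      rw [hdiag]
                      gcongr
                      calc ∑ h ∈ F.erase g, ‖⟪π g⁻¹ η, π h⁻¹ η⟫‖
                          ≤ ∑ _h ∈ F.erase g, δ := Finset.sum_le_sum hoff
                        _ = (F.erase g).card * δ := by rw [Finset.sum_const, nsmul_eq_mul]
                  _ ≤ ‖η‖ ^ 2 + (N : ℝ) * δ := by
                      gcongr
                      have : (F.erase g).card ≤ F.card := Finset.card_erase_le
                      exact_mod_cast hFcard ▸ this
      _ = (N : ℝ) * (‖η‖ ^ 2 + (N : ℝ) * δ) := by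
          rw [Finset.sum_const, hFcard, nsmul_eq_mul]
      _ = (N : ℝ) * ‖η‖ ^ 2 + (N : ℝ) ^ 2 * δ := by ring
  -- C ‖v‖ ≤ N ε / 2
  have hCv : C * ‖v‖ ≤ (N : ℝ) * ε / 2 := by
    have h1 : (C * ‖v‖) ^ 2 ≤ ((N : ℝ) * ε / 2) ^ 2 := by
      have hc2 : C ^ 2 ≤ B := by rw [hB]; linarith
      have : (C * ‖v‖) ^ 2 ≤ B * ((N : ℝ) * ‖η‖ ^ 2 + (N : ℝ) ^ 2 * δ) := by
        have := mul_le_mul hc2 hv2 (by positivity) (le_of_lt hB0)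
        calc (C * ‖v‖) ^ 2 = C ^ 2 * ‖v‖ ^ 2 := by ring
          _ ≤ B * ((N : ℝ) * ‖η‖ ^ 2 + (N : ℝ) ^ 2 * δ) := this
      have hBδ : B * δ = ε ^ 2 / 8 := by rw [hδ]; field_simp
      have h4 : (N : ℝ) * (8 * B * ‖η‖ ^ 2) ≤ (N : ℝ) * ((N : ℝ) * ε ^ 2) :=
        mul_le_mul_of_nonneg_left hNbig hNpos.le
      have h6 : B * (N : ℝ) ^ 2 * δ = (N : ℝ) ^ 2 * ε ^ 2 / 8 := by
        calc B * (N : ℝ) ^ 2 * δ = (N : ℝ) ^ 2 * (B * δ) := by ring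
          _ = (N : ℝ) ^ 2 * (ε ^ 2 / 8) := by rw [hBδ]
          _ = (N : ℝ) ^ 2 * ε ^ 2 / 8 := by ring
      have e1 : (N : ℝ) * (8 * B * ‖η‖ ^ 2) = 8 * (B * (N : ℝ) * ‖η‖ ^ 2) := by ring
      have e2 : (N : ℝ) * ((N : ℝ) * ε ^ 2) = (N : ℝ) ^ 2 * ε ^ 2 := by ring
      have h7 : B * (N : ℝ) * ‖η‖ ^ 2 ≤ (N : ℝ) ^ 2 * ε ^ 2 / 8 := by linarith
      nlinarith [this, h6, h7]
    exact (pow_le_pow_iff_left₀ (mul_nonneg hC0 (norm_nonneg v)) (by positivity)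
      (by norm_num)).mp h1
  -- eventual smallness of invariance defects
  have hev : ∀ᶠ n in Filter.atTop, ∀ g ∈ F, ‖π g (e n) - e n‖ < ε / (2 * (‖η‖ + 1)) := by
    rw [Filter.eventually_all_finset]
    intro g _
    exact (hinv g).eventually_lt_const (by positivity)
  filter_upwards [hev] with n hn
  -- main identity
  have hsum : (N : ℂ) * ⟪e n, η⟫ = ⟪e n, v⟫ + ∑ g ∈ F, ⟪e n - π g (e n), η⟫ := by
    have h1 : ⟪e n, v⟫ = ∑ g ∈ F, ⟪π g (e n), η⟫ := by
      rw [hv, inner_sum]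
      exact Finset.sum_congr rfl fun g _ => (key g (e n) η).symm
    rw [h1, ← Finset.sum_add_distrib]
    have : ∀ g ∈ F, ⟪π g (e n), η⟫ + ⟪e n - π g (e n), η⟫ = ⟪e n, η⟫ := by
      intro g _
      rw [inner_sub_left]; ring
    rw [Finset.sum_congr rfl this, Finset.sum_const, hFcard, nsmul_eq_mul]
  -- final estimate
  have hNnorm : (N : ℝ) * ‖⟪e n, η⟫‖ = ‖(N : ℂ) * ⟪e n, η⟫‖ := by
    rw [norm_mul]
    simp
  have hbound : (N : ℝ) * ‖⟪e n, η⟫‖ < (N : ℝ) * ε := by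
    rw [hNnorm, hsum]
    have h2 : ‖⟪e n, v⟫‖ ≤ C * ‖v‖ :=
      le_trans (norm_inner_le_norm _ _) (mul_le_mul_of_nonneg_right (hbdd n) (norm_nonneg v))
    have h3 : ‖∑ g ∈ F, ⟪e n - π g (e n), η⟫‖ ≤ (N : ℝ) * (ε / (2 * (‖η‖ + 1)) * ‖η‖) := by
      calc ‖∑ g ∈ F, ⟪e n - π g (e n), η⟫‖
          ≤ ∑ g ∈ F, ‖⟪e n - π g (e n), η⟫‖ := norm_sum_le _ _
        _ ≤ ∑ g ∈ F, ε / (2 * (‖η‖ + 1)) * ‖η‖ := by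
            refine Finset.sum_le_sum fun g hg => ?_
            calc ‖⟪e n - π g (e n), η⟫‖ ≤ ‖e n - π g (e n)‖ * ‖η‖ := norm_inner_le_norm _ _
              _ ≤ ε / (2 * (‖η‖ + 1)) * ‖η‖ := by
                  have : ‖e n - π g (e n)‖ = ‖π g (e n) - e n‖ := norm_sub_rev _ _
                  rw [this]
                  exact mul_le_mul_of_nonneg_right (hn g hg).le (norm_nonneg η)
        _ = (N : ℝ) * (ε / (2 * (‖η‖ + 1)) * ‖η‖) := by
            rw [Finset.sum_const, hFcard, nsmul_eq_mul]
    have hkey : ε / (2 * (‖η‖ + 1)) * ‖η‖ < ε / 2 := by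
      have hpos : 0 < ε / (2 * (‖η‖ + 1)) := by positivity
      have h8 : ε / (2 * (‖η‖ + 1)) * ‖η‖ < ε / (2 * (‖η‖ + 1)) * (‖η‖ + 1) :=
        mul_lt_mul_of_pos_left (lt_add_one _) hpos
      have hne : (2 : ℝ) * (‖η‖ + 1) ≠ 0 := by positivity
      have h9 : ε / (2 * (‖η‖ + 1)) * (‖η‖ + 1) = ε / 2 := by
        field_simp
      linarith
    calc ‖⟪e n, v⟫ + ∑ g ∈ F, ⟪e n - π g (e n), η⟫‖
        ≤ ‖⟪e n, v⟫‖ + ‖∑ g ∈ F, ⟪e n - π g (e n), η⟫‖ := norm_add_le _ _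
      _ ≤ C * ‖v‖ + (N : ℝ) * (ε / (2 * (‖η‖ + 1)) * ‖η‖) := add_le_add h2 h3
      _ < (N : ℝ) * ε / 2 + (N : ℝ) * (ε / 2) := by
          refine add_lt_add_of_le_of_lt hCv ?_
          exact mul_lt_mul_of_pos_left hkey hNpos
      _ = (N : ℝ) * ε := by ring
  exact lt_of_mul_lt_mul_left hbound hNpos.le
end
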